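/- Let κ be regular uncountable and κ ≤ μ < λ. If stationary reflection holds for P_κ λ, then stationary reflection holds for P_κ μ. Consequently, stationary reflection for P_κ λ fails at every λ ≥ κ⁺ if and only if it fails at λ = κ⁺. -/

import Mathlib

set_option autoImplicit false

open Cardinal Set

/-- `x` has cardinality `< c`. -/
def cardLT (x : Set Ordinal.{0}) (c : Cardinal.{0}) : Prop :=
  Cardinal.mk ↥x < Cardinal.lift.{1, 0} c

/-- `x` has cardinality `≤ c`. -/
def cardLE (x : Set Ordinal.{0}) (c : Cardinal.{0}) : Prop :=
  Cardinal.mk ↥x ≤ Cardinal.lift.{1, 0} c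

/-- `x` has cardinality `= c`. -/
def cardEQ (x : Set Ordinal.{0}) (c : Cardinal.{0}) : Prop :=
  Cardinal.mk ↥x = Cardinal.lift.{1, 0} c

/-- `P_κ Λ`: subsets of `{β | β < Λ}` of size `< κ`. -/
def pkl (κ : Cardinal.{0}) (Λ : Ordinal.{0}) : Set (Set Ordinal.{0}) :=
  {x | x ⊆ Set.Iio Λ ∧ cardLT x κ}

/-- `C` is club in the ground family `X`: cofinal in `(X, ⊆)` and closed under
unions of `⊆`-increasing chains of length `< κ`. -/
def IsClubP (κ : Cardinal.{0}) (X C : Set (Set Ordinal.{0})) : Prop :=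
  C ⊆ X ∧ (∀ x ∈ X, ∃ c ∈ C, x ⊆ c) ∧
  ∀ (δ : Ordinal.{0}) (f : Ordinal.{0} → Set Ordinal.{0}),
    δ ≠ 0 → δ < κ.ord →
    (∀ i j, i ≤ j → j < δ → f i ⊆ f j) →
    (∀ i < δ, f i ∈ C) →
    (⋃ i ∈ Set.Iio δ, f i) ∈ C

/-- `S` is stationary in the ground family `X`: `S ⊆ X` and `S` meets every club. -/
def IsStatP (κ : Cardinal.{0}) (X S : Set (Set Ordinal.{0})) : Prop :=
  S ⊆ X ∧ ∀ C, IsClubP κ X C → (S ∩ C).Nonempty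

/-- `C` is closed unbounded in the ordinal `κ`. -/
def IsClubIn (C : Set Ordinal.{0}) (κ : Ordinal.{0}) : Prop :=
  C ⊆ Set.Iio κ ∧ (∀ α < κ, ∃ β ∈ C, α ≤ β) ∧
  ∀ δ, δ ≠ 0 → δ < κ → (∀ α < δ, ∃ β ∈ C, α < β ∧ β < δ) → δ ∈ C

/-- `S` is stationary in the ordinal `κ`. -/
def IsStatIn (S : Set Ordinal.{0}) (κ : Ordinal.{0}) : Prop :=
  S ⊆ Set.Iio κ ∧ ∀ C, IsClubIn C κ → (S ∩ C).Nonempty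

/-- `C(f)`: the members of `P_κ Λ` closed under `f`. -/
def clubC (κ : Cardinal.{0}) (Λ : Ordinal.{0}) (f : Finset Ordinal.{0} → Set Ordinal.{0}) :
    Set (Set Ordinal.{0}) :=
  {x | x ∈ pkl κ Λ ∧ ∀ a : Finset Ordinal.{0}, ↑a ⊆ x → f a ⊆ x}

/-- Stationary reflection for `P_κ λ`: every stationary `S ⊆ P_κ λ` reflects to
`P_κ A` for some `A` with `κ ⊆ A ⊆ λ` of size `κ`. -/
def StatReflect (κ lam : Cardinal.{0}) : Prop :=
  ∀ S, IsStatP κ (pkl κ lam.ord) S →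
    ∃ A : Set Ordinal.{0}, Set.Iio κ.ord ⊆ A ∧ A ⊆ Set.Iio lam.ord ∧ cardEQ A κ ∧
      IsStatP κ {x | x ⊆ A ∧ cardLT x κ} (S ∩ {x | x ⊆ A})

namespace StatAux

variable {κ : Cardinal.{0}}


lemma isRegular_lift {κ : Cardinal.{0}} (hκ : κ.IsRegular) :
    (Cardinal.lift.{1,0} κ).IsRegular := by
  constructor
  · exact Cardinal.aleph0_le_lift.2 hκ.1
  · rw [← Cardinal.lift_ord, ← Ordinal.lift_cof]
    exact Cardinal.lift_le.2 hκ.2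

variable {κ : Cardinal.{0}}

lemma cardLT_mono {x y : Set Ordinal.{0}} (h : x ⊆ y) (hy : cardLT y κ) : cardLT x κ :=
  lt_of_le_of_lt (Cardinal.mk_le_mk_of_subset h) hy

lemma cardLT_of_finite {x : Set Ordinal.{0}} (hκ : Cardinal.aleph0 ≤ κ) (hx : x.Finite) :
    cardLT x κ :=
  lt_of_lt_of_le hx.lt_aleph0 (Cardinal.aleph0_le_lift.2 hκ)

lemma cardLT_union (hκ : Cardinal.aleph0 ≤ κ) {x y : Set Ordinal.{0}}
    (hx : cardLT x κ) (hy : cardLT y κ) : cardLT (x ∪ y) κ :=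
  lt_of_le_of_lt (Cardinal.mk_union_le x y)
    (Cardinal.add_lt_of_lt (Cardinal.aleph0_le_lift.2 hκ) hx hy)

lemma cardLT_iUnion (hκ : κ.IsRegular) {ι : Type 1} (hι : Cardinal.mk ι < Cardinal.lift.{1,0} κ)
    {F : ι → Set Ordinal.{0}} (hF : ∀ i, cardLT (F i) κ) : cardLT (⋃ i, F i) κ :=
  lt_of_le_of_lt Cardinal.mk_iUnion_le_sum_mk
    (Cardinal.sum_lt_of_isRegular (isRegular_lift hκ) hι hF)


lemma cardLT_biUnion_Iio (hκ : κ.IsRegular) {δ : Ordinal.{0}} (hδ : δ < κ.ord)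
    {F : Ordinal.{0} → Set Ordinal.{0}} (hF : ∀ i < δ, cardLT (F i) κ) :
    cardLT (⋃ i ∈ Set.Iio δ, F i) κ := by
  rw [Set.biUnion_eq_iUnion]
  refine cardLT_iUnion hκ ?_ ?_
  · rw [Ordinal.mk_Iio_ordinal]
    exact Cardinal.lift_lt.2 (Cardinal.lt_ord.1 hδ)
  · exact fun i => hF i i.2




lemma cardLT_finsetUnion (hκ : Cardinal.aleph0 ≤ κ) {β : Type 1} (s : Finset β)
    (F : β → Set Ordinal.{0}) (hF : ∀ b ∈ s, cardLT (F b) κ) :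
    cardLT (⋃ b ∈ s, F b) κ := by
  classical
  induction s using Finset.induction_on with
  | empty => simpa using cardLT_of_finite hκ finite_empty
  | @insert b s hb IH =>
      rw [Finset.set_biUnion_insert]
      exact lt_of_le_of_lt (Cardinal.mk_union_le _ _)
        (Cardinal.add_lt_of_lt (Cardinal.aleph0_le_lift.2 hκ)
          (hF b (Finset.mem_insert_self b s))
          (IH fun c hc => hF c (Finset.mem_insert_of_mem hc)))

lemma finset_subset_chain_ord {δ : Ordinal.{0}} (hδ : δ ≠ 0) {f : Ordinal.{0} → Set Ordinal.{0}}
    (hmono : ∀ i j, i ≤ j → j < δ → f i ⊆ f j) (a : Finset Ordinal.{0})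
    (ha : ↑a ⊆ ⋃ i ∈ Set.Iio δ, f i) : ∃ i < δ, ↑a ⊆ f i := by
  classical
  induction a using Finset.induction_on with
  | empty => exact ⟨0, pos_iff_ne_zero.2 hδ, by simp⟩
  | @insert α a hα IH =>
      obtain ⟨i, hi, hsub⟩ := IH (fun x hx => ha (Finset.mem_coe.2 (Finset.mem_insert_of_mem (Finset.mem_coe.1 hx))))
      have hmem : α ∈ ⋃ i ∈ Set.Iio δ, f i := ha (by simp)
      simp only [Set.mem_iUnion, Set.mem_Iio, exists_prop] at hmem
      obtain ⟨j, hj, hαj⟩ := hmem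
      refine ⟨max i j, max_lt hi hj, ?_⟩
      rw [Finset.coe_insert, Set.insert_subset_iff]
      exact ⟨hmono j (max i j) (le_max_right i j) (max_lt hi hj) hαj,
        hsub.trans (hmono i (max i j) (le_max_left i j) (max_lt hi hj))⟩

lemma finset_subset_chain_nat {Y : ℕ → Set Ordinal.{0}}
    (hmono : ∀ m n, m ≤ n → Y m ⊆ Y n) (a : Finset Ordinal.{0})
    (ha : ↑a ⊆ ⋃ n, Y n) : ∃ n, ↑a ⊆ Y n := by
  classical
  induction a using Finset.induction_on with
  | empty => exact ⟨0, by simp⟩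
  | @insert α a hα IH =>
      obtain ⟨n, hn⟩ := IH (fun x hx => ha (Finset.mem_coe.2 (Finset.mem_insert_of_mem (Finset.mem_coe.1 hx))))
      have hmem : α ∈ ⋃ n, Y n := ha (by simp)
      simp only [Set.mem_iUnion] at hmem
      obtain ⟨m, hm⟩ := hmem
      refine ⟨max n m, ?_⟩
      rw [Finset.coe_insert, Set.insert_subset_iff]
      exact ⟨hmono m (max n m) (le_max_right n m) hm, hn.trans (hmono n _ (le_max_left n m))⟩

lemma cardLT_setFinsets (hκ : Cardinal.aleph0 ≤ κ) {s : Set Ordinal.{0}} (hs : cardLT s κ) :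
    Cardinal.mk {a : Finset Ordinal.{0} // ↑a ⊆ s} < Cardinal.lift.{1,0} κ := by
  classical
  have hinj : Function.Injective
      (fun a : {a : Finset Ordinal.{0} // ↑a ⊆ s} => Finset.subtype (· ∈ s) a.1) := by
    intro a b hab
    ext1
    have ha := (Finset.subtype_map (· ∈ s) (s := a.1))
    have hb := (Finset.subtype_map (· ∈ s) (s := b.1))
    have haf : Finset.filter (· ∈ s) a.1 = a.1 :=
      Finset.filter_true_of_mem fun x hx => a.2 hx
    have hbf : Finset.filter (· ∈ s) b.1 = b.1 :=
      Finset.filter_true_of_mem fun x hx => b.2 hx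
    have : (Finset.subtype (· ∈ s) a.1).map (Function.Embedding.subtype _) =
        (Finset.subtype (· ∈ s) b.1).map (Function.Embedding.subtype _) := by
      simp only at hab; rw [hab]
    rwa [ha, hb, haf, hbf] at this
  refine lt_of_le_of_lt (Cardinal.mk_le_of_injective hinj) ?_
  by_cases hfin : s.Finite
  · haveI : Fintype ↥s := hfin.fintype
    exact lt_of_lt_of_le (Cardinal.lt_aleph0_of_finite _)
      (Cardinal.aleph0_le_lift.2 hκ)
  · have : Infinite ↥s := Set.infinite_coe_iff.2 hfin
    rw [Cardinal.mk_finset_of_infinite]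
    exact hs


/-- closure of `y` under a set function on finite sets -/
def clOf (f : Finset Ordinal.{0} → Set Ordinal.{0}) (y : Set Ordinal.{0}) : Set Ordinal.{0} :=
  ⋃ (a : Finset Ordinal.{0}) (_ : ↑a ⊆ y), f a

lemma mem_clOf {f : Finset Ordinal.{0} → Set Ordinal.{0}} {y α} :
    α ∈ clOf f y ↔ ∃ a : Finset Ordinal.{0}, ↑a ⊆ y ∧ α ∈ f a := by
  simp [clOf]

lemma subset_clOf {f : Finset Ordinal.{0} → Set Ordinal.{0}} {y} {a : Finset Ordinal.{0}}
    (h : ↑a ⊆ y) : f a ⊆ clOf f y :=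
  fun α hα => mem_clOf.2 ⟨a, h, hα⟩

lemma clOf_mono {f : Finset Ordinal.{0} → Set Ordinal.{0}} {y z} (h : y ⊆ z) :
    clOf f y ⊆ clOf f z := by
  intro α hα
  obtain ⟨a, ha, hαa⟩ := mem_clOf.1 hα
  exact mem_clOf.2 ⟨a, ha.trans h, hαa⟩

lemma clOf_eq_iUnion_subtype (f : Finset Ordinal.{0} → Set Ordinal.{0}) (y : Set Ordinal.{0}) :
    clOf f y = ⋃ (p : {a : Finset Ordinal.{0} // ↑a ⊆ y}), f p.1 := by
  ext α
  simp [clOf]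

lemma cardLT_clOf (hκ : Cardinal.aleph0 ≤ κ) (hreg : κ.IsRegular)
    {f : Finset Ordinal.{0} → Set Ordinal.{0}} {y : Set Ordinal.{0}}
    (hy : cardLT y κ) (hf : ∀ a, cardLT (f a) κ) : cardLT (clOf f y) κ := by
  rw [clOf_eq_iUnion_subtype]
  exact cardLT_iUnion hreg (cardLT_setFinsets hκ hy) (fun p => hf p.1)

theorem exists_goodF (hκ : κ.IsRegular) {Λ : Ordinal.{0}}
    {C : Set (Set Ordinal.{0})} (hC : IsClubP κ (pkl κ Λ) C) :
    ∃ f : Finset Ordinal.{0} → Set Ordinal.{0},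
      (∀ a, f a ∈ C) ∧ (∀ a b : Finset Ordinal.{0}, a ⊆ b → f a ⊆ f b) ∧
      (∀ a : Finset Ordinal.{0}, ↑a ∩ Set.Iio Λ ⊆ f a) ∧
      (∀ y : Set Ordinal.{0}, y ⊆ Set.Iio Λ → cardLT y κ → clOf f y ∈ C) := by
  classical
  obtain ⟨c0, hc0, -⟩ := hC.2.1 ∅ ⟨Set.empty_subset _, cardLT_of_finite hκ.1 Set.finite_empty⟩
  -- choice function
  have hch : ∀ z : Set Ordinal.{0}, z ∈ pkl κ Λ → ∃ w, w ∈ C ∧ z ⊆ w := by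
    intro z hz
    obtain ⟨w, hw, hzw⟩ := hC.2.1 z hz
    exact ⟨w, hw, hzw⟩
  let c : Set Ordinal.{0} → Set Ordinal.{0} := fun z =>
    if h : z ∈ pkl κ Λ then (hch z h).choose else c0
  have hcC : ∀ z, c z ∈ C := by
    intro z
    by_cases h : z ∈ pkl κ Λ
    · simpa [c, h] using ((hch z h).choose_spec).1
    · simp [c, h, hc0]
  have hcsub : ∀ z, z ∈ pkl κ Λ → z ⊆ c z := by
    intro z h
    simpa [c, h] using ((hch z h).choose_spec).2
  have hCpkl : ∀ w ∈ C, w ∈ pkl κ Λ := fun w hw => hC.1 hw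
  -- iterated function
  let g : ℕ → Finset Ordinal.{0} → Set Ordinal.{0} := fun n =>
    Nat.rec (fun a => c (↑a ∩ Set.Iio Λ))
      (fun _ gn a => c ((↑a ∩ Set.Iio Λ) ∪ ⋃ b ∈ a.powerset, gn b)) n
  have hg0 : ∀ a, g 0 a = c (↑a ∩ Set.Iio Λ) := fun _ => rfl
  have hgsucc : ∀ n a, g (n+1) a = c ((↑a ∩ Set.Iio Λ) ∪ ⋃ b ∈ a.powerset, g n b) :=
    fun _ _ => rfl
  have hgC : ∀ n a, g n a ∈ C := by
    intro n
    induction n with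
    | zero => intro a; exact hcC _
    | succ n IH => intro a; exact hcC _
  have hargpkl : ∀ n (a : Finset Ordinal.{0}),
      ((↑a ∩ Set.Iio Λ : Set Ordinal.{0}) ∪ ⋃ b ∈ a.powerset, g n b) ∈ pkl κ Λ := by
    intro n a
    constructor
    · apply Set.union_subset (Set.inter_subset_right)
      apply Set.iUnion₂_subset
      intro b _
      exact (hCpkl _ (hgC n b)).1
    · apply cardLT_union hκ.1
      · exact cardLT_of_finite hκ.1 ((a.finite_toSet).inter_of_left _)
      · exact cardLT_finsetUnion hκ.1 a.powerset _ (fun b _ => (hCpkl _ (hgC n b)).2)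
  have hgsub : ∀ n (a b : Finset Ordinal.{0}), b ∈ a.powerset → g n b ⊆ g (n+1) a := by
    intro n a b hb
    rw [hgsucc]
    refine subset_trans ?_ (hcsub _ (hargpkl n a))
    exact subset_trans (Set.subset_biUnion_of_mem hb) Set.subset_union_right
  have hgmonon : ∀ m n (a : Finset Ordinal.{0}), m ≤ n → g m a ⊆ g n a := by
    intro m n a h
    induction n with
    | zero => rw [Nat.le_zero.1 h]
    | succ n IH =>
      rcases Nat.lt_or_ge m (n+1) with h' | h'
      · exact subset_trans (IH (Nat.lt_succ_iff.1 h')) (hgsub n a a (Finset.mem_powerset_self a))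
      · rw [Nat.le_antisymm h h']
  have hgbase : ∀ n (a : Finset Ordinal.{0}), (↑a ∩ Set.Iio Λ : Set Ordinal.{0}) ⊆ g n a := by
    intro n a
    refine subset_trans ?_ (hgmonon 0 n a (Nat.zero_le n))
    rw [hg0]
    apply hcsub
    exact ⟨Set.inter_subset_right, cardLT_of_finite hκ.1 ((a.finite_toSet).inter_of_left _)⟩
  set f : Finset Ordinal.{0} → Set Ordinal.{0} := fun a => g a.card a with hf
  have hfC : ∀ a, f a ∈ C := fun a => hgC _ _
  have hfmono : ∀ a b : Finset Ordinal.{0}, a ⊆ b → f a ⊆ f b := by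
    intro a b hab
    by_cases heq : a = b
    · rw [heq]
    · have hss : a ⊂ b := ⟨hab, fun h => heq (Finset.Subset.antisymm hab h)⟩
      have hcard : a.card < b.card := Finset.card_lt_card hss
      refine subset_trans (hgsub a.card b a (Finset.mem_powerset.2 hab)) ?_
      exact hgmonon (a.card + 1) b.card b hcard
  have hfbase : ∀ a : Finset Ordinal.{0}, (↑a ∩ Set.Iio Λ : Set Ordinal.{0}) ⊆ f a :=
    fun a => hgbase _ _
  refine ⟨f, hfC, hfmono, hfbase, ?_⟩
  -- main induction
  have main : ∀ θ : Cardinal.{0}, θ < κ → ∀ y : Set Ordinal.{0}, y ⊆ Set.Iio Λ →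
      Cardinal.mk ↥y ≤ Cardinal.lift.{1,0} θ → clOf f y ∈ C := by
    intro θ
    induction θ using WellFoundedLT.induction with
    | _ θ IH =>
      intro hθκ y hyΛ hycard
      rcases lt_or_eq_of_le hycard with hlt | heq
      · obtain ⟨θ', hθ'⟩ := Cardinal.mem_range_lift_of_le hlt.le
        have hθ'θ : θ' < θ := by
          rw [← Cardinal.lift_lt.{0,1}, hθ']
          exact hlt
        exact IH θ' hθ'θ (hθ'θ.trans hθκ) y hyΛ hθ'.ge
      · by_cases hθfin : θ < Cardinal.aleph0
        · -- finite case
          have hyfin : y.Finite := by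
            rw [← Cardinal.lt_aleph0_iff_set_finite]
            rw [heq]
            exact lt_of_lt_of_le (Cardinal.lift_lt.2 hθfin) (by rw [Cardinal.lift_aleph0])
          have hcoe : (↑hyfin.toFinset : Set Ordinal.{0}) = y := hyfin.coe_toFinset
          have : clOf f y = f hyfin.toFinset := by
            apply Set.Subset.antisymm
            · apply Set.iUnion₂_subset
              intro a ha
              apply hfmono
              rw [← Finset.coe_subset, hcoe]
              exact ha
            · exact subset_clOf hcoe.le
          rw [this]
          exact hfC _
        · -- infinite case
          push_neg at hθfin
          have hord : θ.ord ≠ 0 := by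
            intro h0
            have : θ = 0 := by
              have := Cardinal.ord_eq_zero.1 h0
              exact this
            rw [this] at hθfin
            exact absurd (le_trans hθfin (le_of_eq rfl)) (by simp [Cardinal.aleph0_ne_zero])
          have hlim : Order.IsSuccLimit θ.ord := Cardinal.isSuccLimit_ord hθfin
          have hmk : Cardinal.mk ↥(Set.Iio θ.ord) = Cardinal.mk ↥y := by
            rw [Ordinal.mk_Iio_ordinal, Cardinal.card_ord, heq]
          obtain ⟨e⟩ := Cardinal.eq.1 hmk
          set Y : Ordinal.{0} → Set Ordinal.{0} :=
            fun i => (fun j : ↥(Set.Iio θ.ord) => ((e j : ↥y) : Ordinal.{0})) ''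
              {j : ↥(Set.Iio θ.ord) | (j : Ordinal.{0}) < i} with hY
          have hYsub : ∀ i, Y i ⊆ y := by
            rintro i α ⟨j, _, rfl⟩
            exact (e j).2
          have hYmono : ∀ i j, i ≤ j → Y i ⊆ Y j := by
            intro i j hij
            apply Set.image_mono
            intro k hk
            exact lt_of_lt_of_le hk hij
          have hYcard : ∀ i, Cardinal.mk ↥(Y i) ≤ Cardinal.lift.{1,0} i.card := by
            intro i
            refine le_trans (Cardinal.mk_image_le) ?_
            have : Function.Injective
                (fun j : {j : ↥(Set.Iio θ.ord) // (j : Ordinal.{0}) < i} =>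
                  (⟨(j.1 : Ordinal.{0}), j.2⟩ : ↥(Set.Iio i))) := by
              intro j k hjk
              ext1; ext1
              simpa using congrArg Subtype.val hjk
            refine le_trans (Cardinal.mk_le_of_injective this) ?_
            rw [Ordinal.mk_Iio_ordinal]
          have hyunion : y = ⋃ i ∈ Set.Iio θ.ord, Y i := by
            apply Set.Subset.antisymm
            · intro β hβ
              set j := e.symm ⟨β, hβ⟩ with hj
              have hjβ : ((e j : ↥y) : Ordinal.{0}) = β := by rw [hj, Equiv.apply_symm_apply]
              have hjlt : (j : Ordinal.{0}) < θ.ord := j.2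
              have hsucclt : Order.succ (j : Ordinal.{0}) < θ.ord := hlim.succ_lt hjlt
              refine Set.mem_biUnion hsucclt ⟨j, ?_, hjβ⟩
              exact Order.lt_succ (j : Ordinal.{0})
            · exact Set.iUnion₂_subset fun i _ => hYsub i
          have hFC : (⋃ i ∈ Set.Iio θ.ord, clOf f (Y i)) ∈ C := by
            apply hC.2.2 θ.ord (fun i => clOf f (Y i)) hord
              (Cardinal.ord_lt_ord.2 hθκ)
            · intro i j hij _
              exact clOf_mono (hYmono i j hij)
            · intro i hi
              refine IH i.card (Cardinal.lt_ord.1 hi) ((Cardinal.lt_ord.1 hi).trans hθκ)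
                (Y i) ((hYsub i).trans hyΛ) (hYcard i)
          have hcleq : clOf f y = ⋃ i ∈ Set.Iio θ.ord, clOf f (Y i) := by
            apply Set.Subset.antisymm
            · intro α hα
              obtain ⟨a, ha, hαa⟩ := mem_clOf.1 hα
              rw [hyunion] at ha
              obtain ⟨i, hi, hai⟩ := finset_subset_chain_ord hord
                (fun i j hij _ => hYmono i j hij) a ha
              exact Set.mem_biUnion hi (subset_clOf hai hαa)
            · exact Set.iUnion₂_subset fun i _ => clOf_mono (hYsub i)
          rw [hcleq]
          exact hFC
  intro y hyΛ hycard
  obtain ⟨θ, hθ⟩ := Cardinal.mem_range_lift_of_le hycard.le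
  have hθκ : θ < κ := by
    rw [← Cardinal.lift_lt.{0,1}, hθ]
    exact hycard
  exact main θ hθκ y hyΛ hθ.ge


lemma cardLT_iUnion_nat (hreg : κ.IsRegular) (hκu : Cardinal.aleph0 < κ)
    {F : ℕ → Set Ordinal.{0}}
    (hF : ∀ n, cardLT (F n) κ) : cardLT (⋃ n, F n) κ := by
  have h : (⋃ n, F n) = ⋃ u : ULift.{1} ℕ, F u.down := by
    ext α
    simp only [Set.mem_iUnion]
    exact ⟨fun ⟨n, h⟩ => ⟨⟨n⟩, h⟩, fun ⟨u, h⟩ => ⟨u.down, h⟩⟩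
  rw [h]
  refine cardLT_iUnion hreg ?_ (fun u => hF u.down)
  rw [Cardinal.mk_uLift, Cardinal.mk_nat]
  exact Cardinal.lift_lt.2 hκu

theorem mono_aux (κ μ lam : Cardinal.{0}) (hκ : κ.IsRegular) (hκu : Cardinal.aleph0 < κ)
    (hκμ : κ ≤ μ) (hμlam : μ ≤ lam) : StatReflect κ lam → StatReflect κ μ := by
  intro H S hS
  have hIio : Set.Iio μ.ord ⊆ Set.Iio lam.ord :=
    Set.Iio_subset_Iio (Cardinal.ord_le_ord.2 hμlam)
  set S' : Set (Set Ordinal.{0}) := {x | x ∈ pkl κ lam.ord ∧ x ∩ Set.Iio μ.ord ∈ S} with hS'def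
  have hS'stat : IsStatP κ (pkl κ lam.ord) S' := by
    constructor
    · exact fun x hx => hx.1
    · intro C hCclub
      obtain ⟨f, hfC, hfmono, hfbase, hfcl⟩ := exists_goodF hκ hCclub
      set f' : Finset Ordinal.{0} → Set Ordinal.{0} := fun a => f a ∩ Set.Iio μ.ord with hf'
      have hf'card : ∀ a, cardLT (f' a) κ :=
        fun a => cardLT_mono Set.inter_subset_left (hCclub.1 (hfC a)).2
      set E : Set (Set Ordinal.{0}) :=
        {y | y ∈ pkl κ μ.ord ∧ ∀ a : Finset Ordinal.{0}, ↑a ⊆ y → f' a ⊆ y} with hE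
      have hEclub : IsClubP κ (pkl κ μ.ord) E := by
        refine ⟨fun y hy => hy.1, ?_, ?_⟩
        · -- cofinal
          intro y0 hy0
          set F : ℕ → Set Ordinal.{0} :=
            fun n => Nat.rec y0 (fun _ Yn => Yn ∪ clOf f' Yn) n with hF
          have hFsucc : ∀ n, F (n+1) = F n ∪ clOf f' (F n) := fun n => rfl
          have hFmono1 : ∀ n, F n ⊆ F (n+1) := fun n => (hFsucc n) ▸ Set.subset_union_left
          have hFmono : ∀ m n, m ≤ n → F m ⊆ F n := by
            intro m n h
            induction n with
            | zero => rw [Nat.le_zero.1 h]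
            | succ n IH =>
              rcases Nat.lt_or_ge m (n+1) with h' | h'
              · exact (IH (Nat.lt_succ_iff.1 h')).trans (hFmono1 n)
              · rw [Nat.le_antisymm h h']
          have hFpkl : ∀ n, F n ∈ pkl κ μ.ord := by
            intro n
            induction n with
            | zero => exact hy0
            | succ n IH =>
              rw [hFsucc]
              constructor
              · apply Set.union_subset IH.1
                apply Set.iUnion₂_subset
                intro a _
                exact Set.inter_subset_right
              · exact cardLT_union hκ.1 IH.2 (cardLT_clOf hκ.1 hκ IH.2 hf'card)
          refine ⟨⋃ n, F n, ⟨⟨?_, ?_⟩, ?_⟩, ?_⟩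
          · exact Set.iUnion_subset fun n => (hFpkl n).1
          · exact cardLT_iUnion_nat hκ hκu (fun n => (hFpkl n).2)
          · intro a ha
            obtain ⟨n, hn⟩ := finset_subset_chain_nat hFmono a ha
            exact (subset_clOf hn).trans ((Set.subset_union_right).trans
              ((hFsucc n) ▸ Set.subset_iUnion F (n+1)))
          · exact Set.subset_iUnion F 0
        · -- chains
          intro δ g hδ0 hδκ hmono hmem
          refine ⟨⟨?_, ?_⟩, ?_⟩
          · exact Set.iUnion₂_subset fun i hi => ((hmem i hi).1).1
          · exact cardLT_biUnion_Iio hκ hδκ fun i hi => ((hmem i hi).1).2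
          · intro a ha
            obtain ⟨i, hi, hai⟩ := finset_subset_chain_ord hδ0 hmono a ha
            exact ((hmem i hi).2 a hai).trans (Set.subset_biUnion_of_mem hi)
      obtain ⟨y, hyS, hypkl, hycl⟩ := hS.2 E hEclub
      have hyΛ : y ⊆ Set.Iio lam.ord := hypkl.1.trans hIio
      have hxC : clOf f y ∈ C := hfcl y hyΛ hypkl.2
      have hxy : clOf f y ∩ Set.Iio μ.ord = y := by
        apply Set.Subset.antisymm
        · rintro α ⟨hαx, hαμ⟩
          obtain ⟨a, ha, hαa⟩ := mem_clOf.1 hαx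
          exact hycl a ha ⟨hαa, hαμ⟩
        · intro α hα
          have hsing : (↑({α} : Finset Ordinal.{0}) : Set Ordinal.{0}) ⊆ y := by
            simpa using hα
          refine ⟨subset_clOf hsing ?_, hypkl.1 hα⟩
          apply hfbase
          exact ⟨by simp, hIio (hypkl.1 hα)⟩
      refine ⟨clOf f y, ⟨hCclub.1 hxC, ?_⟩, hxC⟩
      show clOf f y ∩ Set.Iio μ.ord ∈ S
      rw [hxy]
      exact hyS
  obtain ⟨A, hA1, hA2, hA3, hA4⟩ := H S' hS'stat
  refine ⟨A ∩ Set.Iio μ.ord, ?_, Set.inter_subset_right, ?_, ?_, ?_⟩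
  · exact fun α hα => ⟨hA1 hα, lt_of_lt_of_le hα (Cardinal.ord_le_ord.2 hκμ)⟩
  · -- cardEQ
    apply le_antisymm
    · rw [← hA3]
      exact Cardinal.mk_le_mk_of_subset Set.inter_subset_left
    · have h1 : Cardinal.mk ↥(Set.Iio κ.ord) = Cardinal.lift.{1,0} κ := by
        rw [Ordinal.mk_Iio_ordinal, Cardinal.card_ord]
      rw [← h1]
      exact Cardinal.mk_le_mk_of_subset
        (fun α hα => ⟨hA1 hα, lt_of_lt_of_le hα (Cardinal.ord_le_ord.2 hκμ)⟩)
  · rintro x ⟨hxS, hxA'⟩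
    exact ⟨hxA', (hS.1 hxS).2⟩
  · intro C' hC'
    set C'' : Set (Set Ordinal.{0}) :=
      {x | x ⊆ A ∧ cardLT x κ ∧ x ∩ Set.Iio μ.ord ∈ C'} with hC''def
    have hC''club : IsClubP κ {x | x ⊆ A ∧ cardLT x κ} C'' := by
      refine ⟨fun x hx => ⟨hx.1, hx.2.1⟩, ?_, ?_⟩
      · intro x hx
        have hx' : x ∩ Set.Iio μ.ord ∈ {z : Set Ordinal.{0} | z ⊆ A ∩ Set.Iio μ.ord ∧ cardLT z κ} :=
          ⟨fun β hβ => ⟨hx.1 hβ.1, hβ.2⟩, cardLT_mono Set.inter_subset_left hx.2⟩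
        obtain ⟨c, hcC', hsub⟩ := hC'.2.1 _ hx'
        have hcA' : c ⊆ A ∩ Set.Iio μ.ord := (hC'.1 hcC').1
        have hceq : (x ∪ c) ∩ Set.Iio μ.ord = c := by
          apply Set.Subset.antisymm
          · rintro β ⟨hβ, hβμ⟩
            rcases hβ with hβ | hβ
            · exact hsub ⟨hβ, hβμ⟩
            · exact hβ
          · exact fun β hβ => ⟨Or.inr hβ, (hcA' hβ).2⟩
        refine ⟨x ∪ c, ⟨?_, ?_, ?_⟩, Set.subset_union_left⟩
        · exact Set.union_subset hx.1 (hcA'.trans Set.inter_subset_left)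
        · exact cardLT_union hκ.1 hx.2 (hC'.1 hcC').2
        · rw [hceq]; exact hcC'
      · intro δ g hδ0 hδκ hmono hmem
        refine ⟨?_, ?_, ?_⟩
        · exact Set.iUnion₂_subset fun i hi => (hmem i hi).1
        · exact cardLT_biUnion_Iio hκ hδκ fun i hi => (hmem i hi).2.1
        · have hdist : (⋃ i ∈ Set.Iio δ, g i) ∩ Set.Iio μ.ord
              = ⋃ i ∈ Set.Iio δ, (g i ∩ Set.Iio μ.ord) := by
            ext β
            simp only [Set.mem_inter_iff, Set.mem_iUnion, exists_prop]
            tauto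
          rw [hdist]
          exact hC'.2.2 δ (fun i => g i ∩ Set.Iio μ.ord) hδ0 hδκ
            (fun i j hij hj => Set.inter_subset_inter (hmono i j hij hj) subset_rfl)
            (fun i hi => (hmem i hi).2.2)
    obtain ⟨x, ⟨⟨hxpkl, hxS⟩, hxA⟩, hxAA, hxcard, hxC'⟩ := hA4.2 C'' hC''club
    exact ⟨x ∩ Set.Iio μ.ord, ⟨hxS, fun β hβ => ⟨hxA hβ.1, hβ.2⟩⟩, hxC'⟩


end StatAux

/-- For `κ ≤ μ < λ`, stationary reflection for `P_κ λ` implies stationary reflection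
for `P_κ μ`; consequently it fails at every `λ ≥ κ⁺` iff it fails at `λ = κ⁺`. -/
theorem statReflect_mono (κ μ lam : Cardinal.{0})
    (hκ : κ.IsRegular) (hκu : Cardinal.aleph0 < κ)
    (hκμ : κ ≤ μ) (hμlam : μ < lam) :
    (StatReflect κ lam → StatReflect κ μ) ∧
    ((∀ l : Cardinal.{0}, Order.succ κ ≤ l → ¬ StatReflect κ l) ↔
      ¬ StatReflect κ (Order.succ κ)) := by
  constructor
  · exact StatAux.mono_aux κ μ lam hκ hκu hκμ hμlam.le
  · constructor
    · intro h
      exact h (Order.succ κ) le_rfl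
    · intro h l hl
      rcases lt_or_eq_of_le hl with hlt | heq
      · intro hSR
        exact h (StatAux.mono_aux κ (Order.succ κ) l hκ hκu (Order.le_succ κ) hlt.le hSR)
      · rw [← heq]
        exact h
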